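/- Quantitative distance lower bound after limited communication: let χ ≥ 3 be real, q ∈ ℕ, and s ∈ ℕ with s ≤ 12q/χ + 1. Then every x ∈ ℓ² with x_l = 0 for all l > s satisfies ‖x − x*‖² ≥ (ρ⁴/(1 − ρ²)) · ρ^{24q/χ}, and consequently ‖x − x*‖² ≥ (ρ⁴/(1 − ρ²)) · (max{0, 1 − √(6μ)/√L})^{24q/χ}. -/
import Mathlib


open scoped BigOperators

/-- The real Hilbert space `ℓ²` of square-summable sequences (indexed from `0`; the paper's
coordinate `l ≥ 1` corresponds to the index `l - 1`). -/
abbrev ell2 : Type := lp (fun _ : ℕ => ℝ) 2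

/-- **Quantitative distance lower bound after limited communication.**
Let `χ ≥ 3`, `q ∈ ℕ`, `s ∈ ℕ` with `s ≤ 12q/χ + 1`. Then every `x ∈ ℓ²` whose (paper)
coordinates `x_l` vanish for `l > s` satisfies
`‖x − x*‖² ≥ (ρ⁴/(1 − ρ²)) · ρ^{24q/χ}`, and consequently
`‖x − x*‖² ≥ (ρ⁴/(1 − ρ²)) · (max {0, 1 − √(6μ)/√L})^{24q/χ}`
(real exponents taken via the real power function). -/
theorem limited_communication_lower_bound (μ L : ℝ) (hμ : 0 < μ) (hμL : μ < L)
    (ρ : ℝ)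
    (hρ : ρ = (Real.sqrt (2 * L / (3 * μ) + 1 / 3) - 1) /
      (Real.sqrt (2 * L / (3 * μ) + 1 / 3) + 1))
    (xs : ell2) (hxs : ∀ l : ℕ, xs l = ρ ^ (l + 1))
    (χ : ℝ) (hχ : 3 ≤ χ) (q s : ℕ) (hs : (s : ℝ) ≤ 12 * (q : ℝ) / χ + 1)
    (x : ell2) (hx : ∀ l : ℕ, s ≤ l → x l = 0) :
    (ρ ^ 4 / (1 - ρ ^ 2)) * ρ ^ (24 * (q : ℝ) / χ) ≤ ‖x - xs‖ ^ 2 ∧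
    (ρ ^ 4 / (1 - ρ ^ 2)) *
        (max 0 (1 - Real.sqrt (6 * μ) / Real.sqrt L)) ^ (24 * (q : ℝ) / χ) ≤
      ‖x - xs‖ ^ 2 := by
  have hχ0 : (0:ℝ) < χ := by linarith
  set t := Real.sqrt (2 * L / (3 * μ) + 1 / 3) with ht
  have harg : (1:ℝ) < 2 * L / (3 * μ) + 1 / 3 := by
    have h1 : (2:ℝ)/3 < 2 * L / (3 * μ) := by
      rw [div_lt_div_iff₀ (by norm_num) (by positivity)]
      nlinarith
    linarith
  have ht1 : (1:ℝ) < t := by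
    rw [ht]
    exact (Real.lt_sqrt zero_le_one).mpr (by nlinarith)
  have hρ0 : 0 < ρ := by
    rw [hρ]; exact div_pos (by linarith) (by linarith)
  have hρ1 : ρ < 1 := by
    rw [hρ, div_lt_one (by linarith)]; linarith
  have h1ρ2 : 0 < 1 - ρ ^ 2 := by nlinarith
  have hexp0 : 0 ≤ 24 * (q : ℝ) / χ := by positivity
  -- coordinates of x - xs
  have hcoord : ∀ l : ℕ, s ≤ l → (x - xs) l = -(ρ ^ (l + 1)) := by
    intro l hl
    have : (x - xs) l = x l - xs l := by
      rw [lp.coeFn_sub]; rfl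
    rw [this, hx l hl, hxs l]; ring
  -- norm formula
  have hnorm : ‖x - xs‖ ^ 2 = ∑' l : ℕ, ‖(x - xs) l‖ ^ (2:ℝ) := by
    have h := lp.norm_rpow_eq_tsum (p := 2) (by norm_num) (x - xs)
    have h2 : ((2 : ENNReal).toReal) = (2:ℝ) := by norm_num
    rw [h2] at h
    rw [← h, ← Real.rpow_natCast ‖x - xs‖ 2]
    norm_num
  have hsum : Summable (fun l : ℕ => ‖(x - xs) l‖ ^ (2:ℝ)) := by
    have := (lp.memℓp (x - xs)).summable (p := 2) (by norm_num)
    simpa using this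
  have hρ2lt : ρ ^ 2 < 1 := by nlinarith
  have hgeom : Summable (fun n : ℕ => (ρ ^ 2) ^ (s + 1) * (ρ ^ 2) ^ n) :=
    (summable_geometric_of_lt_one (by positivity) hρ2lt).mul_left _
  have hkey : (ρ ^ 2) ^ (s + 1) * (1 - ρ ^ 2)⁻¹ ≤ ∑' l : ℕ, ‖(x - xs) l‖ ^ (2:ℝ) := by
    have hle : ∑' n : ℕ, (ρ ^ 2) ^ (s + 1) * (ρ ^ 2) ^ n
        ≤ ∑' l : ℕ, ‖(x - xs) l‖ ^ (2:ℝ) := by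
      apply Summable.tsum_le_tsum_of_inj (fun n => s + n)
        (fun a b h => by simpa using h)
        (fun c _ => by positivity)
        ?_ hgeom hsum
      intro n
      have h1 : (x - xs) (s + n) = -(ρ ^ (s + n + 1)) := hcoord _ (Nat.le_add_right s n)
      rw [h1]
      have : ‖-(ρ ^ (s + n + 1))‖ = ρ ^ (s + n + 1) := by
        rw [norm_neg, Real.norm_eq_abs, abs_of_nonneg (by positivity)]
      rw [this, show (2:ℝ) = ((2:ℕ):ℝ) by norm_num, Real.rpow_natCast]
      apply le_of_eq
      ring
    calc (ρ ^ 2) ^ (s + 1) * (1 - ρ ^ 2)⁻¹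
        = ∑' n : ℕ, (ρ ^ 2) ^ (s + 1) * (ρ ^ 2) ^ n := by
          rw [tsum_mul_left, tsum_geometric_of_lt_one (by positivity) hρ2lt]
      _ ≤ _ := hle
  -- exponent comparison
  have hmain : (ρ ^ 4 / (1 - ρ ^ 2)) * ρ ^ (24 * (q : ℝ) / χ)
      ≤ (ρ ^ 2) ^ (s + 1) * (1 - ρ ^ 2)⁻¹ := by
    have h24 : 24 * (q:ℝ) / χ = 2 * (12 * (q:ℝ) / χ) := by ring
    have h2s : 2 * (s:ℝ) + 2 ≤ 4 + 24 * (q : ℝ) / χ := by linarith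
    have hle1 : ρ ^ ((4:ℝ) + 24 * (q : ℝ) / χ) ≤ ρ ^ ((2 * (s:ℝ) + 2)) :=
      Real.rpow_le_rpow_of_exponent_ge hρ0 hρ1.le h2s
    have e1 : ρ ^ ((4:ℝ) + 24 * (q : ℝ) / χ) = ρ ^ 4 * ρ ^ (24 * (q : ℝ) / χ) := by
      rw [Real.rpow_add hρ0, show (4:ℝ) = ((4:ℕ):ℝ) by norm_num, Real.rpow_natCast]
    have e2 : ρ ^ (2 * (s:ℝ) + 2) = (ρ ^ 2) ^ (s + 1) := by
      rw [show (2 * (s:ℝ) + 2) = ((2 * (s + 1) : ℕ) : ℝ) by push_cast; ring,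
        Real.rpow_natCast, pow_mul]
    rw [div_mul_eq_mul_div, div_le_iff₀ h1ρ2, ← e1]
    calc ρ ^ ((4:ℝ) + 24 * (q : ℝ) / χ) ≤ (ρ ^ 2) ^ (s + 1) := by rw [← e2]; exact hle1
      _ = (ρ ^ 2) ^ (s + 1) * (1 - ρ ^ 2)⁻¹ * (1 - ρ ^ 2) := by field_simp
  have first : (ρ ^ 4 / (1 - ρ ^ 2)) * ρ ^ (24 * (q : ℝ) / χ) ≤ ‖x - xs‖ ^ 2 := by
    rw [hnorm]
    exact le_trans hmain hkey
  refine ⟨first, ?_⟩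
  -- second part: base comparison
  have hbase : max 0 (1 - Real.sqrt (6 * μ) / Real.sqrt L) ≤ ρ := by
    apply max_le hρ0.le
    have hsq : Real.sqrt (6 * μ) / Real.sqrt L = Real.sqrt (6 * μ / L) := by
      rw [Real.sqrt_div (by positivity)]
    have hL0 : (0:ℝ) < L := lt_trans hμ hμL
    have h2 : Real.sqrt (2 * L / (3 * μ)) * Real.sqrt (6 * μ / L) = 2 := by
      rw [← Real.sqrt_mul (div_nonneg (by linarith) (by linarith))]
      have h4 : 2 * L / (3 * μ) * (6 * μ / L) = 4 := by
        field_simp [hμ.ne', hL0.ne']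
        ring
      rw [h4, show (4:ℝ) = 2 ^ 2 by norm_num, Real.sqrt_sq (by norm_num)]
    have hts : Real.sqrt (2 * L / (3 * μ)) ≤ t := Real.sqrt_le_sqrt (by linarith)
    have ha0 : 0 ≤ Real.sqrt (6 * μ / L) := Real.sqrt_nonneg _
    have h3 : 2 ≤ (t + 1) * Real.sqrt (6 * μ / L) := by nlinarith
    rw [hsq, hρ, le_div_iff₀ (by linarith : (0:ℝ) < t + 1)]
    nlinarith
  have hmono : (max 0 (1 - Real.sqrt (6 * μ) / Real.sqrt L)) ^ (24 * (q : ℝ) / χ)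
      ≤ ρ ^ (24 * (q : ℝ) / χ) :=
    Real.rpow_le_rpow (le_max_left _ _) hbase hexp0
  have hcoef : 0 ≤ ρ ^ 4 / (1 - ρ ^ 2) := by positivity
  calc (ρ ^ 4 / (1 - ρ ^ 2)) *
        (max 0 (1 - Real.sqrt (6 * μ) / Real.sqrt L)) ^ (24 * (q : ℝ) / χ)
      ≤ (ρ ^ 4 / (1 - ρ ^ 2)) * ρ ^ (24 * (q : ℝ) / χ) :=
        mul_le_mul_of_nonneg_left hmono hcoef
    _ ≤ ‖x - xs‖ ^ 2 := first
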